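/- Let r, t ≥ 3 be integers, m = ⌈(r+1)/2⌉, and let c : E → (nonempty subsets of {1,...,r}) be a coloring of the edge set E of the complete graph on {1,...,t} such that for all triples of distinct vertices u, v, w there is no violating triple (a,b,c') ∈ c(uv) × c(vw) × c(uw). Define f(e) = |c(e)|, W = ∏_{e ∈ E} f(e), and a = |{e ∈ E : f(e) > m}|. Then W ≤ m^{C(t,2) + t + 5} · ((m² − 1)/m²)^a. -/

import Mathlib

open Finset

theorem prod_offDiag_insert' {α : Type*} [DecidableEq α] (f : α × α → ℝ) {a : α} {s : Finset α}
    (ha : a ∉ s) :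
    ∏ p ∈ (insert a s).offDiag, f p =
      (∏ p ∈ s.offDiag, f p) * ∏ x ∈ s, (f (a, x) * f (x, a)) := by
  rw [Finset.offDiag_insert ha, Finset.prod_union, Finset.prod_union,
    Finset.singleton_product, Finset.product_singleton, Finset.prod_map, Finset.prod_map,
    Finset.prod_mul_distrib]
  · simp [Function.comp]; ring
  · simp only [Finset.disjoint_left, Finset.mem_offDiag, Finset.mem_singleton,
      Finset.mem_product]
    rintro ⟨x, y⟩ hx ⟨h1, h2⟩
    subst h1
    exact ha hx.1
  · simp only [Finset.disjoint_left, Finset.mem_union, Finset.mem_offDiag, Finset.mem_singleton,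
      Finset.mem_product]
    rintro ⟨x, y⟩ hx ⟨h1, h2⟩
    subst h2
    rcases hx with ⟨_, h, _⟩ | ⟨h, h'⟩
    · exact ha h
    · exact ha (h ▸ h1)

theorem key_pair (m x y : ℕ) (hm : 2 ≤ m) (hxy : x + y ≤ 2 * m) :
    ((x : ℝ) * (if m < x then (m:ℝ)^2/((m:ℝ)^2-1) else 1)) *
      ((y : ℝ) * (if m < y then (m:ℝ)^2/((m:ℝ)^2-1) else 1)) ≤ (m:ℝ)^2 := by
  have hmR : (2:ℝ) ≤ (m:ℝ) := by exact_mod_cast hm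
  have hden : (0:ℝ) < (m:ℝ)^2 - 1 := by nlinarith
  have key : ∀ a b : ℕ, a ≤ m → m < b → a + b ≤ 2*m →
      ((a : ℝ) * (if m < a then (m:ℝ)^2/((m:ℝ)^2-1) else 1)) *
      ((b : ℝ) * (if m < b then (m:ℝ)^2/((m:ℝ)^2-1) else 1)) ≤ (m:ℝ)^2 := by
    intro a b ha hb hab
    rw [if_neg (by omega), if_pos hb]
    have h1 : (a:ℝ) * b ≤ (m:ℝ)^2 - 1 := by
      have h2 : a * b + 1 ≤ m * m := by
        zify
        nlinarith [mul_le_mul_of_nonneg_right (show (a:ℤ) ≤ 2*m - b by push_cast at hab ⊢; linarith)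
            (show (0:ℤ) ≤ (b:ℤ) by positivity),
          sq_nonneg ((b:ℤ) - m), show (1:ℤ) ≤ (b:ℤ) - m by push_cast at hb ⊢; omega]
      have h2' : ((a:ℝ) * b) + 1 ≤ (m:ℝ) * m := by exact_mod_cast h2
      nlinarith
    calc (a:ℝ) * 1 * ((b:ℝ) * ((m:ℝ)^2/((m:ℝ)^2-1)))
        = (a:ℝ) * b * ((m:ℝ)^2/((m:ℝ)^2-1)) := by ring
      _ ≤ ((m:ℝ)^2-1) * ((m:ℝ)^2/((m:ℝ)^2-1)) := by
          apply mul_le_mul_of_nonneg_right h1 (by positivity)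
      _ = (m:ℝ)^2 := by field_simp
  rcases le_or_gt x m with hx | hx <;> rcases le_or_gt y m with hy | hy
  · rw [if_neg (by omega), if_neg (by omega)]
    have hx' : (x:ℝ) ≤ m := by exact_mod_cast hx
    have hy' : (y:ℝ) ≤ m := by exact_mod_cast hy
    have h0x : (0:ℝ) ≤ x := Nat.cast_nonneg x
    have h0y : (0:ℝ) ≤ y := Nat.cast_nonneg y
    nlinarith
  · exact key x y hx hy hxy
  · rw [mul_comm]; exact key y x hy hx (by omega)
  · omega

theorem exp_arith (n : ℕ) : (n*n - n + 2*n + 10) + 6 + 4*n = ((n+2)*(n+2) - (n+2)) + 2*(n+2) + 10 := by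
  have h1 : (n+2)*(n+2) - (n+2) = n*n + 3*n + 2 := by
    have h : (n+2)*(n+2) = n*n + 3*n + 2 + (n+2) := by ring
    rw [h, Nat.add_sub_cancel]
  have h2 : n ≤ n*n := by nlinarith
  rw [h1]
  omega

theorem main_lemma {t m : ℕ} (hm : 2 ≤ m) (s : Fin t → Fin t → ℕ)
    (hsym : ∀ u v, s u v = s v u)
    (hub : ∀ u v : Fin t, u ≠ v → s u v ≤ 2 * m - 1)
    (hsum : ∀ u v w : Fin t, u ≠ v → u ≠ w → v ≠ w → m < s u v → s u w + s v w ≤ 2 * m)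
    (S : Finset (Fin t)) :
    ∏ p ∈ S.offDiag, ((s p.1 p.2 : ℝ) * (if m < s p.1 p.2 then (m:ℝ)^2/((m:ℝ)^2-1) else 1))
      ≤ (m : ℝ) ^ (S.offDiag.card + 2 * S.card + 10) := by
  induction S using Finset.strongInductionOn with
  | _ S ih => ?_
  have hmR : (2:ℝ) ≤ (m:ℝ) := by exact_mod_cast hm
  have hm1 : (1:ℝ) ≤ (m:ℝ) := by linarith
  have hden : (0:ℝ) < (m:ℝ)^2 - 1 := by nlinarith
  set F : Fin t × Fin t → ℝ :=
    fun p => (s p.1 p.2 : ℝ) * (if m < s p.1 p.2 then (m:ℝ)^2/((m:ℝ)^2-1) else 1) with hF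
  have hF0 : ∀ p, 0 ≤ F p := by
    intro p
    dsimp only [F]
    split
    · positivity
    · positivity
  have hFsym : ∀ x y : Fin t, F (x, y) = F (y, x) := by
    intro x y; dsimp only [F]; rw [hsym x y]
  by_cases hbig : ∃ p ∈ S.offDiag, m < s p.1 p.2
  case neg =>
    push_neg at hbig
    calc ∏ p ∈ S.offDiag, F p ≤ ∏ p ∈ S.offDiag, (m:ℝ) := by
          apply Finset.prod_le_prod (fun p _ => hF0 p)
          intro p hp
          dsimp only [F]
          rw [if_neg (by exact Nat.not_lt.2 (hbig p hp))]
          rw [mul_one]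
          exact_mod_cast hbig p hp
      _ = (m:ℝ) ^ S.offDiag.card := by rw [Finset.prod_const]
      _ ≤ (m:ℝ) ^ (S.offDiag.card + 2 * S.card + 10) := by
          apply pow_le_pow_right₀ hm1; omega
  case pos =>
    obtain ⟨⟨u, v⟩, hmem, hb⟩ := hbig
    rw [Finset.mem_offDiag] at hmem
    obtain ⟨huS, hvS, huv⟩ := hmem
    set S' := (S.erase u).erase v with hS'
    have hvnotin : v ∉ S' := Finset.notMem_erase _ _
    have hT : insert v S' = S.erase u :=
      Finset.insert_erase (Finset.mem_erase.2 ⟨Ne.symm huv, hvS⟩)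
    have hu : u ∉ insert v S' := by rw [hT]; exact Finset.notMem_erase _ _
    have hSeq : S = insert u (insert v S') := by rw [hT, Finset.insert_erase huS]
    have hwu : ∀ w ∈ S', w ≠ u := fun w hw =>
      Finset.ne_of_mem_erase (Finset.mem_of_mem_erase hw)
    have hwv : ∀ w ∈ S', w ≠ v := fun w hw h => hvnotin (h ▸ hw)
    have hsubS : S' ⊂ S := by
      refine (Finset.ssubset_iff_of_subset
        ((Finset.erase_subset _ _).trans (Finset.erase_subset _ _))).2 ⟨u, huS, ?_⟩
      intro h
      exact Finset.ne_of_mem_erase (Finset.mem_of_mem_erase h) rfl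
    have b1 := ih S' hsubS
    -- bound for the big edge itself
    have b2 : F (u, v) * F (v, u) ≤ (m:ℝ)^6 := by
      have h1 : F (u, v) ≤ (m:ℝ)^3 := by
        dsimp only [F]
        rw [if_pos hb]
        have hs1 : (s u v : ℝ) ≤ 2*(m:ℝ) - 1 := by
          have := hub u v huv
          have h2 : (s u v : ℝ) ≤ ((2*m - 1 : ℕ) : ℝ) := by exact_mod_cast this
          have h3 : ((2*m - 1 : ℕ) : ℝ) = 2*(m:ℝ) - 1 := by
            have : 1 ≤ 2*m := by omega
            push_cast [this]
            ring
          linarith [h3 ▸ h2]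
        have hstep : (s u v : ℝ) * ((m:ℝ)^2/((m:ℝ)^2-1))
            ≤ (2*(m:ℝ) - 1) * ((m:ℝ)^2/((m:ℝ)^2-1)) :=
          mul_le_mul_of_nonneg_right hs1 (by positivity)
        refine hstep.trans ?_
        rw [mul_div_assoc', div_le_iff₀ hden]
        nlinarith [mul_le_mul_of_nonneg_left (show (4:ℝ) ≤ (m:ℝ)^2 by nlinarith)
          (pow_nonneg (show (0:ℝ) ≤ (m:ℝ) by linarith) 3),
          pow_nonneg (show (0:ℝ) ≤ (m:ℝ) by linarith) 3]
      have h0 : 0 ≤ F (u, v) := hF0 _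
      rw [← hFsym u v]
      nlinarith [h1, h0, pow_nonneg (le_trans zero_le_one hm1) 3]
    have b3 : ∀ w ∈ S', (F (v, w) * F (w, v)) * (F (u, w) * F (w, u)) ≤ (m:ℝ)^4 := by
      intro w hw
      have hk : F (u, w) * F (v, w) ≤ (m:ℝ)^2 :=
        key_pair m (s u w) (s v w) hm
          (hsum u v w huv (Ne.symm (hwu w hw)) (Ne.symm (hwv w hw)) hb)
      have e : (F (v, w) * F (w, v)) * (F (u, w) * F (w, u))
          = (F (u, w) * F (v, w)) * (F (u, w) * F (v, w)) := by
        rw [← hFsym v w, ← hFsym u w]; ring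
      rw [e]
      calc (F (u, w) * F (v, w)) * (F (u, w) * F (v, w)) ≤ (m:ℝ)^2 * (m:ℝ)^2 := by
            apply mul_le_mul hk hk (mul_nonneg (hF0 _) (hF0 _)) (by positivity)
        _ = (m:ℝ)^4 := by ring
    -- decompose the product
    rw [hSeq, prod_offDiag_insert' F hu, prod_offDiag_insert' F hvnotin,
      Finset.prod_insert hvnotin]
    have hshape : ((∏ p ∈ S'.offDiag, F p) * ∏ w ∈ S', (F (v, w) * F (w, v))) *
        ((F (u, v) * F (v, u)) * ∏ w ∈ S', (F (u, w) * F (w, u)))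
        = ((∏ p ∈ S'.offDiag, F p) * (F (u, v) * F (v, u))) *
          ∏ w ∈ S', ((F (v, w) * F (w, v)) * (F (u, w) * F (w, u))) := by
      rw [Finset.prod_mul_distrib (s := S') (f := fun w => F (v, w) * F (w, v))
        (g := fun w => F (u, w) * F (w, u))]
      ring
    rw [hshape]
    have hcard : (insert u (insert v S')).card = S'.card + 2 := by
      rw [Finset.card_insert_of_notMem hu, Finset.card_insert_of_notMem hvnotin]
    have hexp : (S'.offDiag.card + 2 * S'.card + 10) + 6 + 4 * S'.card
        = (insert u (insert v S')).offDiag.card + 2 * (insert u (insert v S')).card + 10 := by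
      rw [Finset.offDiag_card, Finset.offDiag_card, hcard]
      exact exp_arith S'.card
    calc ((∏ p ∈ S'.offDiag, F p) * (F (u, v) * F (v, u))) *
          ∏ w ∈ S', ((F (v, w) * F (w, v)) * (F (u, w) * F (w, u)))
        ≤ ((m:ℝ) ^ (S'.offDiag.card + 2 * S'.card + 10) * (m:ℝ)^6) *
          ∏ w ∈ S', (m:ℝ)^4 := by
          apply mul_le_mul
          · apply mul_le_mul b1 b2 (mul_nonneg (hF0 _) (hF0 _))
              (pow_nonneg (by linarith) _)
          · exact Finset.prod_le_prod
              (fun w _ => mul_nonneg (mul_nonneg (hF0 _) (hF0 _)) (mul_nonneg (hF0 _) (hF0 _)))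
              b3
          · exact Finset.prod_nonneg
              (fun w _ => mul_nonneg (mul_nonneg (hF0 _) (hF0 _)) (mul_nonneg (hF0 _) (hF0 _)))
          · positivity
      _ = (m:ℝ) ^ ((S'.offDiag.card + 2 * S'.card + 10) + 6 + 4 * S'.card) := by
          rw [Finset.prod_const, ← pow_mul, ← pow_add, ← pow_add]
      _ = _ := by rw [hexp]

def ViolatingTriple (i j k : ℕ) : Prop :=
  ¬ (i ≤ j + k ∧ j ≤ i + k ∧ k ≤ i + j)

theorem stmt_7 (r t m : ℕ) (hr : 3 ≤ r) (ht : 3 ≤ t) (hm : m = (r + 2) / 2)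
    (c : Fin t → Fin t → Finset ℕ)
    (hsymm : ∀ u v, c u v = c v u)
    (hrange : ∀ u v : Fin t, u ≠ v → (c u v).Nonempty ∧ c u v ⊆ Finset.Icc 1 r)
    (hmetric : ∀ u v w : Fin t, u ≠ v → v ≠ w → u ≠ w →
      ∀ a ∈ c u v, ∀ b ∈ c v w, ∀ x ∈ c u w, ¬ ViolatingTriple a b x) :
    ((∏ p ∈ Finset.univ.filter (fun p : Fin t × Fin t => p.1 < p.2),
        (c p.1 p.2).card : ℕ) : ℝ) ≤
      (m : ℝ) ^ (t.choose 2 + t + 5) *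
        (((m : ℝ) ^ 2 - 1) / (m : ℝ) ^ 2) ^
          ((Finset.univ.filter
            (fun p : Fin t × Fin t => p.1 < p.2 ∧ m < (c p.1 p.2).card)).card) := by
  have hm2 : 2 ≤ m := by omega
  have hr2m : r + 1 ≤ 2 * m := by omega
  have hmR : (2:ℝ) ≤ (m:ℝ) := by exact_mod_cast hm2
  have hden : (0:ℝ) < (m:ℝ)^2 - 1 := by nlinarith
  set s : Fin t → Fin t → ℕ := fun u v => (c u v).card with hs
  have hsym' : ∀ u v, s u v = s v u := fun u v => by simp only [hs, hsymm u v]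
  have hub : ∀ u v : Fin t, u ≠ v → s u v ≤ 2 * m - 1 := by
    intro u v huv
    have h1 : (c u v).card ≤ (Finset.Icc 1 r).card := Finset.card_le_card (hrange u v huv).2
    rw [Nat.card_Icc] at h1
    simp only [hs]
    omega
  -- interval bounds for a nonempty color set
  have hcard : ∀ (x y : Fin t) (hne : (c x y).Nonempty),
      (c x y).card + (c x y).min' hne ≤ (c x y).max' hne + 1 := by
    intro x y hne
    have hsubI : c x y ⊆ Finset.Icc ((c x y).min' hne) ((c x y).max' hne) := by
      intro z hz
      rw [Finset.mem_Icc]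
      exact ⟨Finset.min'_le _ z hz, Finset.le_max' _ z hz⟩
    have h2 := Finset.card_le_card hsubI
    rw [Nat.card_Icc] at h2
    have hmm : (c x y).min' hne ≤ (c x y).max' hne :=
      Finset.min'_le _ _ (Finset.max'_mem _ _)
    omega
  have hsum : ∀ u v w : Fin t, u ≠ v → u ≠ w → v ≠ w → m < s u v →
      s u w + s v w ≤ 2 * m := by
    intro u v w huv huw hvw hb
    obtain ⟨hne_uv, hsub_uv⟩ := hrange u v huv
    obtain ⟨hne_uw, hsub_uw⟩ := hrange u w huw
    obtain ⟨hne_vw, hsub_vw⟩ := hrange v w hvw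
    have tri1 : (c u w).max' hne_uw ≤ (c u v).min' hne_uv + (c v w).min' hne_vw := by
      have h := hmetric u v w huv hvw huw _ (Finset.min'_mem _ hne_uv)
        _ (Finset.min'_mem _ hne_vw) _ (Finset.max'_mem _ hne_uw)
      simp only [ViolatingTriple, not_not] at h
      exact h.2.2
    have tri2 : (c v w).max' hne_vw ≤ (c u v).min' hne_uv + (c u w).min' hne_uw := by
      have h := hmetric v u w (Ne.symm huv) huw hvw
        ((c u v).min' hne_uv) (by rw [hsymm v u]; exact Finset.min'_mem _ hne_uv)
        _ (Finset.min'_mem _ hne_uw) _ (Finset.max'_mem _ hne_vw)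
      simp only [ViolatingTriple, not_not] at h
      exact h.2.2
    have hBuv : (c u v).max' hne_uv ≤ r :=
      (Finset.mem_Icc.1 (hsub_uv (Finset.max'_mem _ hne_uv))).2
    have hc_uv := hcard u v hne_uv
    have hc_uw := hcard u w hne_uw
    have hc_vw := hcard v w hne_vw
    simp only [hs] at hb ⊢
    omega
  set F : Fin t × Fin t → ℝ :=
    fun p => (s p.1 p.2 : ℝ) * (if m < s p.1 p.2 then (m:ℝ)^2/((m:ℝ)^2-1) else 1) with hF
  have H : ∏ p ∈ (Finset.univ : Finset (Fin t)).offDiag, F p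
      ≤ (m : ℝ) ^ ((Finset.univ : Finset (Fin t)).offDiag.card + 2 * Finset.univ.card + 10) :=
    main_lemma hm2 s hsym' hub hsum Finset.univ
  set Flt := Finset.univ.filter (fun p : Fin t × Fin t => p.1 < p.2) with hFlt
  set Fgt := Finset.univ.filter (fun p : Fin t × Fin t => p.2 < p.1) with hFgt
  have hF0 : ∀ p, 0 ≤ F p := by
    intro p
    dsimp only [F]
    split
    · positivity
    · positivity
  have hsplit : (Finset.univ : Finset (Fin t)).offDiag = Flt ∪ Fgt := by
    ext ⟨x, y⟩
    simp only [hFlt, hFgt, Finset.mem_offDiag, Finset.mem_union, Finset.mem_filter,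
      Finset.mem_univ, true_and]
    constructor
    · intro h
      rcases lt_or_gt_of_ne h with h' | h'
      · exact Or.inl h'
      · exact Or.inr h'
    · intro h
      rcases h with h | h
      · exact ne_of_lt h
      · exact ne_of_gt h
  have hdisj : Disjoint Flt Fgt := by
    rw [Finset.disjoint_left]
    rintro ⟨x, y⟩ h1 h2
    simp only [hFlt, hFgt, Finset.mem_filter] at h1 h2
    exact absurd h2.2 (not_lt.2 (le_of_lt h1.2))
  have hswap : ∏ p ∈ Fgt, F p = ∏ p ∈ Flt, F p := by
    apply Finset.prod_bij' (fun p _ => Prod.swap p) (fun p _ => Prod.swap p)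
    · intro a ha
      simp only [hFlt, hFgt, Finset.mem_filter, Finset.mem_univ, true_and] at ha ⊢
      exact ha
    · intro a ha
      simp only [hFlt, hFgt, Finset.mem_filter, Finset.mem_univ, true_and] at ha ⊢
      exact ha
    · intro a _; simp
    · intro a _; simp
    · intro a _
      dsimp only [F]
      rw [hsym' a.1 a.2]
      rfl
  have hprod_off : ∏ p ∈ (Finset.univ : Finset (Fin t)).offDiag, F p
      = (∏ p ∈ Flt, F p) ^ 2 := by
    rw [hsplit, Finset.prod_union hdisj, hswap, sq]
  have hE : (Finset.univ : Finset (Fin t)).offDiag.card + 2 * (Finset.univ : Finset (Fin t)).card + 10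
      = 2 * (t.choose 2 + t + 5) := by
    rw [Finset.offDiag_card]
    simp only [Finset.card_univ, Fintype.card_fin]
    obtain ⟨t', rfl⟩ : ∃ t', t = t' + 1 := ⟨t - 1, by omega⟩
    rw [Nat.choose_two_right]
    have h1 : (t' + 1) * (t' + 1) = (t' + 1) * t' + (t' + 1) := by ring
    have h2 : (t' + 1) * t' = t' * (t' + 1) := by ring
    have h3 : t' + 1 - 1 = t' := by omega
    obtain ⟨k, hk⟩ := Nat.even_mul_succ_self t'
    rw [h3]
    omega
  have hM0 : (0:ℝ) ≤ (m:ℝ) ^ (t.choose 2 + t + 5) := by positivity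
  have hY0 : (0:ℝ) ≤ ∏ p ∈ Flt, F p := Finset.prod_nonneg fun p _ => hF0 p
  have hYle : ∏ p ∈ Flt, F p ≤ (m:ℝ) ^ (t.choose 2 + t + 5) := by
    have h2 : (∏ p ∈ Flt, F p) ^ 2 ≤ ((m:ℝ) ^ (t.choose 2 + t + 5)) ^ 2 := by
      rw [← hprod_off, ← pow_mul, mul_comm (t.choose 2 + t + 5) 2, ← hE]
      exact H
    exact (pow_le_pow_iff_left₀ hY0 hM0 (by norm_num)).1 h2
  -- split off the bonus factors
  set q : ℝ := (m:ℝ)^2/((m:ℝ)^2-1) with hq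
  have hq0 : 0 < q := by positivity
  set a := (Finset.univ.filter
    (fun p : Fin t × Fin t => p.1 < p.2 ∧ m < (c p.1 p.2).card)).card with ha
  have hXY : ∏ p ∈ Flt, F p
      = (∏ p ∈ Flt, ((c p.1 p.2).card : ℝ)) * q ^ a := by
    dsimp only [F]
    rw [Finset.prod_mul_distrib]
    congr 1
    have h1 : ∏ p ∈ Flt, (if m < s p.1 p.2 then q else 1)
        = ∏ p ∈ Flt.filter (fun p => m < s p.1 p.2), q := (Finset.prod_filter _ _).symm
    rw [h1, Finset.prod_const]
    congr 1
    rw [hFlt, Finset.filter_filter]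
  have hfinal : (∏ p ∈ Flt, ((c p.1 p.2).card : ℝ))
      ≤ (m : ℝ) ^ (t.choose 2 + t + 5) * (((m:ℝ)^2 - 1)/(m:ℝ)^2) ^ a := by
    have hinv : ((m:ℝ)^2 - 1)/(m:ℝ)^2 = q⁻¹ := by
      rw [hq, inv_div]
    rw [hinv]
    have hX0 : (0:ℝ) ≤ ∏ p ∈ Flt, ((c p.1 p.2).card : ℝ) :=
      Finset.prod_nonneg fun p _ => Nat.cast_nonneg _
    calc (∏ p ∈ Flt, ((c p.1 p.2).card : ℝ))
        = ((∏ p ∈ Flt, ((c p.1 p.2).card : ℝ)) * q ^ a) * (q⁻¹) ^ a := by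
          rw [mul_assoc, ← mul_pow, mul_inv_cancel₀ (ne_of_gt hq0), one_pow, mul_one]
      _ ≤ (m : ℝ) ^ (t.choose 2 + t + 5) * (q⁻¹) ^ a := by
          apply mul_le_mul_of_nonneg_right _ (by positivity)
          rw [← hXY]
          exact hYle
  rw [Nat.cast_prod]
  exact hfinal
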